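/- Let λₙ = (n−1/2)²π², μ > 0, and N a positive integer with −λₙ + μ < 0 for all n > N. Let Λ_N = diag(−λ₁+μ,…,−λ_N+μ), Γ_N = [γ₁,…,γ_N] a row vector, and L_N ∈ ℝᴺ such that Λ_N + L_N Γ_N is Hurwitz. In the orthonormal basis {φₙ}, the operator A₂ + F₂ C₁S on L²(0,1), where F₂ c = c ∑_{n=1}^N lₙ φₙ and C₁S f = ∑_{n=1}^∞ γₙ ⟨f, φₙ⟩, has the property: every eigenvalue λ of A₂ + F₂C₁S either is an eigenvalue of Λ_N + L_N Γ_N or equals −λ_{j₀} + μ for some j₀ > N; in both cases Re λ < 0. -/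
import Mathlib


open Real

/-- Every eigenvalue of the modally-decomposed operator `A₂ + F₂ C₁S` is either
an eigenvalue of `Λ_N + L_N Γ_N` or of the form `-λ_{j₀} + μ` with `j₀ > N`;
in both cases it has negative real part.  (Indices are shifted so that the
`n`-th mode, `n ≥ 1`, corresponds to index `n - 1`.) -/
theorem closed_loop_eigenvalues_negative {N : ℕ}
    (μ : ℝ) (hμ : 0 < μ)
    (lam : ℕ → ℝ) (hlam : ∀ n : ℕ, lam n = ((n : ℝ) + 1 - 1/2)^2 * π^2)
    (hN : ∀ n : ℕ, N ≤ n → -lam n + μ < 0)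
    (l : Fin N → ℝ) (γ : ℕ → ℝ)
    (M : Matrix (Fin N) (Fin N) ℂ)
    (hM : M = Matrix.diagonal (fun i : Fin N => ((-lam i + μ : ℝ) : ℂ)) +
      Matrix.vecMulVec (fun i => (l i : ℂ)) (fun j : Fin N => (γ j : ℂ)))
    (hHurwitz : ∀ ζ ∈ spectrum ℂ M, ζ.re < 0)
    (Λ : ℂ) (z : ℕ → ℂ) (hz : z ≠ 0)
    (hz2 : Summable (fun n => ‖z n‖ ^ 2))
    (hzγ : Summable (fun n => (γ n : ℂ) * z n))
    (heig : ∀ n : ℕ,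
      ((-lam n + μ : ℝ) : ℂ) * z n +
        (if h : n < N then (l ⟨n, h⟩ : ℂ) else 0) * (∑' j, (γ j : ℂ) * z j)
      = Λ * z n) :
    (Λ ∈ spectrum ℂ M ∨ ∃ j₀ : ℕ, N ≤ j₀ ∧ Λ = ((-lam j₀ + μ : ℝ) : ℂ)) ∧
      Λ.re < 0 := by
  by_cases hcase : ∃ n, N ≤ n ∧ z n ≠ 0
  · obtain ⟨n, hn, hzn⟩ := hcase
    have h1 := heig n
    rw [dif_neg (by omega), zero_mul, add_zero] at h1
    have hΛ : Λ = ((-lam n + μ : ℝ) : ℂ) := (mul_right_cancel₀ hzn h1.symm)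
    refine ⟨Or.inr ⟨n, hn, hΛ⟩, ?_⟩
    rw [hΛ]
    simpa using hN n hn
  · push_neg at hcase
    have hv : ∃ i : Fin N, z i ≠ 0 := by
      by_contra h
      push_neg at h
      apply hz
      funext n
      by_cases hn : n < N
      · exact h ⟨n, hn⟩
      · exact hcase n (le_of_not_gt hn)
    obtain ⟨i0, hi0⟩ := hv
    set v : Fin N → ℂ := fun i => z i with hvdef
    have hvne : v ≠ 0 := fun h => hi0 (congrFun h i0)
    have hS : (∑' j, (γ j : ℂ) * z j) = ∑ j : Fin N, (γ j : ℂ) * z j := by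
      rw [tsum_eq_sum (s := Finset.range N)
        (fun b hb => by rw [hcase b (by simpa using hb), mul_zero]),
        ← Fin.sum_univ_eq_sum_range (fun j => (γ j : ℂ) * z j) N]
    have hMv : M.mulVec v = Λ • v := by
      funext i
      have h1 := heig i
      rw [dif_pos i.isLt, Fin.eta, hS] at h1
      calc M.mulVec v i
          = ((-lam i + μ : ℝ) : ℂ) * z i +
            (l i : ℂ) * ∑ j : Fin N, (γ j : ℂ) * z j := by
            simp [hM, Matrix.mulVec, dotProduct, Matrix.vecMulVec,
              Matrix.diagonal, add_mul, Finset.sum_add_distrib, mul_assoc,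
              ← Finset.mul_sum, Finset.sum_ite_eq, hvdef]
        _ = Λ * z i := h1
    have hmem : Λ ∈ spectrum ℂ M := by
      rw [spectrum.mem_iff]
      intro hu
      have hdet0 : ((algebraMap ℂ (Matrix (Fin N) (Fin N) ℂ)) Λ - M).det = 0 := by
        rw [← Matrix.exists_mulVec_eq_zero_iff]
        refine ⟨v, hvne, ?_⟩
        rw [Matrix.sub_mulVec, hMv]
        have : (algebraMap ℂ (Matrix (Fin N) (Fin N) ℂ)) Λ = Λ • 1 := by
          simp [Algebra.algebraMap_eq_smul_one]
        rw [this, Matrix.smul_mulVec, Matrix.one_mulVec, sub_self]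
      have := (Matrix.isUnit_iff_isUnit_det _).mp hu
      rw [hdet0] at this
      exact (not_isUnit_zero this)
    exact ⟨Or.inl hmem, hHurwitz Λ hmem⟩
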